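/- arXiv:math/0402333 — 2 statements merged into one kernel-verified Lean document; each statement's English description precedes it below -/
import Mathlib

section
/- If A : T → SL(2,R) is continuous and homotopic to the identity (T = R/Z), α ∈ T, and B : T → SL(2,R) is continuous of degree r (i.e. homotopic to θ ↦ E_r(θ), the rotation matrix by angle 2πrθ), then the fibered rotation number of the conjugated cocycle (α, B(·+α)A(·)B(·)^{-1}) equals the fibered rotation number of (α, A) plus rα, modulo 1. -/
open Real Filter

noncomputable section

/-- `f` is a (continuous) angle lift of the projective action of the 1-periodic map
`A : ℝ → SL(2,ℝ)` on the circle fiber: the direction of A(θ)·(cos 2πx, sin 2πx) is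
the angle x + f(θ,x) (in turns), and f is 1-periodic in x. -/
def IsAngleLift (A : ℝ → Matrix (Fin 2) (Fin 2) ℝ) (f : ℝ → ℝ → ℝ) : Prop :=
  Continuous (fun p : ℝ × ℝ => f p.1 p.2) ∧
  (∀ θ x, f θ (x + 1) = f θ x) ∧
  ∀ θ x, ∃ c : ℝ, 0 < c ∧
    (A θ).mulVec ![Real.cos (2 * π * x), Real.sin (2 * π * x)] =
      c • ![Real.cos (2 * π * (x + f θ x)), Real.sin (2 * π * (x + f θ x))]

/-- The lifted skew product F̃(θ,x) = (θ+α, x+f(θ,x)). -/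
def liftMap (α : ℝ) (f : ℝ → ℝ → ℝ) : ℝ × ℝ → ℝ × ℝ :=
  fun p => (p.1 + α, p.2 + f p.1 p.2)

/-- ρ is the fibered rotation number determined by the angle lift f: the Birkhoff
averages (1/n)Σ_{k<n} f(F̃^k(θ,x)) converge to ρ for every (θ,x). -/
def HasFiberedRotNum (α : ℝ) (f : ℝ → ℝ → ℝ) (ρ : ℝ) : Prop :=
  ∀ θ x : ℝ,
    Tendsto (fun n : ℕ =>
        (∑ k ∈ Finset.range n,
          f ((liftMap α f)^[k] (θ, x)).1 ((liftMap α f)^[k] (θ, x)).2) / n)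
      atTop (nhds ρ)

lemma angle_eq_int {a b c : ℝ} (hc : 0 < c)
    (h : ![Real.cos (2*π*a), Real.sin (2*π*a)] = c • ![Real.cos (2*π*b), Real.sin (2*π*b)]) :
    ∃ m : ℤ, a = b + m := by
  have h0 := congrFun h 0
  have h1 := congrFun h 1
  simp [Matrix.cons_val_zero, Matrix.cons_val_one] at h0 h1
  have e1 := Real.sin_sq_add_cos_sq (2*π*a)
  have e2 := Real.sin_sq_add_cos_sq (2*π*b)
  have hq : c^2 * (Real.sin (2*π*b)^2 + Real.cos (2*π*b)^2) = 1 := by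
    rw [← e1, h0, h1]; ring
  rw [e2, mul_one] at hq
  have hc1 : c = 1 := by
    have hz : (c-1)*(c+1) = 0 := by linear_combination hq
    rcases mul_eq_zero.1 hz with h' | h'
    · linarith
    · linarith
  subst hc1
  rw [one_mul] at h0 h1
  have hcos : Real.cos (2*π*a - 2*π*b) = 1 := by
    rw [Real.cos_sub, h0, h1]; linarith
  obtain ⟨n, hn⟩ := (Real.cos_eq_one_iff _).1 hcos
  refine ⟨n, ?_⟩
  have hπ : (2*π) ≠ 0 := by positivity
  have h2 : 2*π*(b + n) = 2*π*a := by linarith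
  have := mul_left_cancel₀ hπ h2
  linarith

lemma per_int {F : ℝ → ℝ} (h : ∀ x, F (x+1) = F x) (x : ℝ) (m : ℤ) : F (x + m) = F x := by
  have hp : Function.Periodic F 1 := h
  simpa using (hp.int_mul m) x

lemma int_valued_const {d : ℝ × ℝ → ℝ} (hd : Continuous d)
    (hint : ∀ p, ∃ m : ℤ, d p = m) (p q : ℝ × ℝ) : d p = d q := by
  obtain ⟨mp, hmp⟩ := hint p
  obtain ⟨mq, hmq⟩ := hint q
  have key : ∀ u v : ℝ × ℝ, ∀ a b : ℤ, d u = a → d v = b → a < b → False := by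
    intro u v a b ha hb hab
    set φ : ℝ → ℝ := fun t => d (u + t • (v - u)) with hφ
    have hφc : Continuous φ := hd.comp (by continuity)
    have hφ0 : φ 0 = d u := by simp [hφ]
    have hφ1 : φ 1 = d v := by simp [hφ]
    have hv : (a : ℝ) + 1/2 ∈ Set.uIcc (φ 0) (φ 1) := by
      rw [hφ0, hφ1, ha, hb, Set.mem_uIcc]
      left
      have : (a:ℝ) + 1 ≤ b := by exact_mod_cast hab
      constructor <;> linarith
    obtain ⟨t, _, ht⟩ := intermediate_value_uIcc hφc.continuousOn hv
    obtain ⟨mt, hmt⟩ := hint (u + t • (v - u))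
    simp only [hφ] at ht
    rw [hmt] at ht
    have h2 : (2*mt : ℝ) = 2*a+1 := by push_cast at ht ⊢; linarith
    have : (2*mt : ℤ) = 2*a + 1 := by exact_mod_cast h2
    omega
  rcases lt_trichotomy mp mq with hlt | heq | hlt
  · exact (key p q mp mq hmp hmq hlt).elim
  · rw [hmp, hmq, heq]
  · exact (key q p mq mp hmq hmp hlt).elim

lemma bounded_biper {h : ℝ → ℝ → ℝ} (hc : Continuous fun p : ℝ×ℝ => h p.1 p.2)
    (h1 : ∀ θ x, h (θ+1) x = h θ x) (h2 : ∀ θ x, h θ (x+1) = h θ x) :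
    ∃ C, ∀ θ x, |h θ x| ≤ C := by
  obtain ⟨C, hC⟩ := (IsCompact.prod (isCompact_Icc (a := (0:ℝ)) (b := 1))
      (isCompact_Icc (a := (0:ℝ)) (b := 1))).exists_bound_of_continuousOn hc.continuousOn
  refine ⟨C, fun θ x => ?_⟩
  have e1 : h θ x = h (Int.fract θ) (Int.fract x) := by
    have a1 : h θ x = h (Int.fract θ) x := by
      conv_lhs => rw [← Int.fract_add_floor θ]
      exact per_int (F := fun y => h y x) (fun y => h1 y x) (Int.fract θ) ⌊θ⌋
    have a2 : h (Int.fract θ) x = h (Int.fract θ) (Int.fract x) := by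
      conv_lhs => rw [← Int.fract_add_floor x]
      exact per_int (F := fun y => h (Int.fract θ) y) (fun y => h2 (Int.fract θ) y) (Int.fract x) ⌊x⌋
    rw [a1, a2]
  rw [e1]
  have := hC (Int.fract θ, Int.fract x) ⟨⟨Int.fract_nonneg θ, (Int.fract_lt_one θ).le⟩,
    ⟨Int.fract_nonneg x, (Int.fract_lt_one x).le⟩⟩
  simpa using this

/-- If A : 𝕋 → SL(2,ℝ) is continuous and homotopic to the identity (angle lift
1-periodic in θ) and B : 𝕋 → SL(2,ℝ) is continuous of degree r (angle lift g with
g(θ+1,x) = g(θ,x) + r), then the fibered rotation number of the conjugated cocycle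
(α, B(·+α)A(·)B(·)⁻¹) equals that of (α,A) plus r·α, modulo 1. -/
theorem stmt0 (α : ℝ) (r : ℤ)
    (A B : ℝ → Matrix.SpecialLinearGroup (Fin 2) ℝ)
    (hAper : ∀ θ, A (θ + 1) = A θ) (hBper : ∀ θ, B (θ + 1) = B θ)
    (f : ℝ → ℝ → ℝ)
    (hf : IsAngleLift (fun θ => (A θ : Matrix (Fin 2) (Fin 2) ℝ)) f)
    (hfdeg : ∀ θ x, f (θ + 1) x = f θ x)
    (g : ℝ → ℝ → ℝ)
    (hg : IsAngleLift (fun θ => (B θ : Matrix (Fin 2) (Fin 2) ℝ)) g)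
    (hgdeg : ∀ θ x, g (θ + 1) x = g θ x + r)
    (f' : ℝ → ℝ → ℝ)
    (hf' : IsAngleLift
      (fun θ => ((B (θ + α) * A θ * (B θ)⁻¹ : Matrix.SpecialLinearGroup (Fin 2) ℝ) :
        Matrix (Fin 2) (Fin 2) ℝ)) f')
    (hf'deg : ∀ θ x, f' (θ + 1) x = f' θ x)
    (ρA ρC : ℝ)
    (hρA : HasFiberedRotNum α f ρA)
    (hρC : HasFiberedRotNum α f' ρC) :
    ∃ m : ℤ, ρC = ρA + (r : ℝ) * α + (m : ℝ) := by
  obtain ⟨hfc, hfp, hfv⟩ := hf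
  obtain ⟨hgc, hgp, hgv⟩ := hg
  obtain ⟨hf'c, hf'p, hf'v⟩ := hf'
  -- key pointwise conjugation relation, with a priori varying integer
  have key1 : ∀ θ x, ∃ m : ℤ, (x + g θ x) + f' θ (x + g θ x)
      = ((x + f θ x) + g (θ+α) (x + f θ x)) + m := by
    intro θ x
    obtain ⟨c1, hc1, hB⟩ := hgv θ x
    obtain ⟨c2, hc2, hA⟩ := hfv θ x
    obtain ⟨c3, hc3, hB'⟩ := hgv (θ+α) (x + f θ x)
    obtain ⟨c4, hc4, hC⟩ := hf'v θ (x + g θ x)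
    have hBinv : ((((B θ)⁻¹ : Matrix.SpecialLinearGroup (Fin 2) ℝ)) : Matrix (Fin 2) (Fin 2) ℝ).mulVec
        ![Real.cos (2 * π * (x + g θ x)), Real.sin (2 * π * (x + g θ x))]
        = c1⁻¹ • ![Real.cos (2 * π * x), Real.sin (2 * π * x)] := by
      have h5 : ((((B θ)⁻¹ : Matrix.SpecialLinearGroup (Fin 2) ℝ)) : Matrix (Fin 2) (Fin 2) ℝ).mulVec
          (((B θ : Matrix (Fin 2) (Fin 2) ℝ)).mulVec ![Real.cos (2 * π * x), Real.sin (2 * π * x)])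
          = ![Real.cos (2 * π * x), Real.sin (2 * π * x)] := by
        rw [Matrix.mulVec_mulVec, ← Matrix.SpecialLinearGroup.coe_mul, inv_mul_cancel,
          Matrix.SpecialLinearGroup.coe_one, Matrix.one_mulVec]
      rw [hB, Matrix.mulVec_smul] at h5
      exact ((inv_smul_eq_iff₀ hc1.ne').2 h5.symm).symm
    have hM : (((B (θ + α) * A θ * (B θ)⁻¹ : Matrix.SpecialLinearGroup (Fin 2) ℝ) :
          Matrix (Fin 2) (Fin 2) ℝ)).mulVec
          ![Real.cos (2 * π * (x + g θ x)), Real.sin (2 * π * (x + g θ x))]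
        = (c1⁻¹ * (c2 * c3)) •
          ![Real.cos (2 * π * ((x + f θ x) + g (θ+α) (x + f θ x))),
            Real.sin (2 * π * ((x + f θ x) + g (θ+α) (x + f θ x)))] := by
      rw [Matrix.SpecialLinearGroup.coe_mul, Matrix.SpecialLinearGroup.coe_mul,
        ← Matrix.mulVec_mulVec, ← Matrix.mulVec_mulVec, hBinv, Matrix.mulVec_smul, hA,
        Matrix.mulVec_smul, Matrix.mulVec_smul, hB']
      rw [smul_smul, smul_smul, mul_assoc]
    rw [hM] at hC
    have hpos : (0:ℝ) < c4⁻¹ * (c1⁻¹ * (c2 * c3)) := by positivity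
    have hfin : ![Real.cos (2 * π * ((x + g θ x) + f' θ (x + g θ x))),
        Real.sin (2 * π * ((x + g θ x) + f' θ (x + g θ x)))]
        = (c4⁻¹ * (c1⁻¹ * (c2 * c3))) •
          ![Real.cos (2 * π * ((x + f θ x) + g (θ+α) (x + f θ x))),
            Real.sin (2 * π * ((x + f θ x) + g (θ+α) (x + f θ x)))] := by
      rw [mul_smul]
      exact ((inv_smul_eq_iff₀ hc4.ne').2 hC).symm
    obtain ⟨m, hm⟩ := angle_eq_int hpos hfin
    exact ⟨m, hm⟩
  -- the integer is constant
  have hu : Continuous (fun p : ℝ×ℝ => p.2 + g p.1 p.2) := continuous_snd.add hgc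
  have hw : Continuous (fun p : ℝ×ℝ => p.2 + f p.1 p.2) := continuous_snd.add hfc
  have hdc : Continuous (fun p : ℝ×ℝ =>
      ((p.2 + g p.1 p.2) + f' p.1 (p.2 + g p.1 p.2))
        - ((p.2 + f p.1 p.2) + g (p.1 + α) (p.2 + f p.1 p.2))) := by
    apply Continuous.sub
    · exact hu.add (hf'c.comp (continuous_fst.prodMk hu))
    · exact hw.add (hgc.comp ((continuous_fst.add continuous_const).prodMk hw))
  have hint : ∀ p : ℝ×ℝ, ∃ m : ℤ, (fun p : ℝ×ℝ =>
      ((p.2 + g p.1 p.2) + f' p.1 (p.2 + g p.1 p.2))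
        - ((p.2 + f p.1 p.2) + g (p.1 + α) (p.2 + f p.1 p.2))) p = m := by
    intro p
    obtain ⟨m, hm⟩ := key1 p.1 p.2
    exact ⟨m, by simp only; linarith⟩
  obtain ⟨m₀, hm₀⟩ := hint ((0:ℝ), (0:ℝ))
  have hkey : ∀ θ x : ℝ, (x + g θ x) + f' θ (x + g θ x)
      = ((x + f θ x) + g (θ+α) (x + f θ x)) + (m₀:ℝ) := by
    intro θ x
    have h2 : ((x + g θ x) + f' θ (x + g θ x))
        - ((x + f θ x) + g (θ + α) (x + f θ x)) = (m₀:ℝ) :=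
      (int_valued_const hdc hint (θ, x) ((0:ℝ),(0:ℝ))).trans hm₀
    linarith
  -- first coordinate of iterates
  have hiter1 : ∀ n : ℕ, ((liftMap α f)^[n] ((0:ℝ),(0:ℝ))).1 = n * α := by
    intro n
    induction n with
    | zero => simp
    | succ n ih =>
      rw [Function.iterate_succ_apply']
      simp only [liftMap, ih]
      push_cast; ring
  -- orbit correspondence
  have horb : ∀ k : ℕ, (liftMap α f')^[k] ((0:ℝ), 0 + g 0 0)
      = (((liftMap α f)^[k] ((0:ℝ),(0:ℝ))).1,
         (((liftMap α f)^[k] ((0:ℝ),(0:ℝ))).2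
            + g (((liftMap α f)^[k] ((0:ℝ),(0:ℝ))).1) (((liftMap α f)^[k] ((0:ℝ),(0:ℝ))).2))
          + (k : ℝ) * (m₀ : ℝ)) := by
    intro k
    induction k with
    | zero => simp
    | succ k ih =>
      rw [Function.iterate_succ_apply', ih, Function.iterate_succ_apply' (liftMap α f)]
      set q := (liftMap α f)^[k] ((0:ℝ),(0:ℝ)) with hq
      simp only [liftMap]
      have hper : f' q.1 ((q.2 + g q.1 q.2) + ((k * m₀ : ℤ) : ℝ)) = f' q.1 (q.2 + g q.1 q.2) :=
        per_int (hf'p q.1) _ _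
      push_cast at hper
      apply Prod.ext
      · rfl
      · show (q.2 + g q.1 q.2) + (k:ℝ)*(m₀:ℝ) + f' q.1 ((q.2 + g q.1 q.2) + (k:ℝ)*(m₀:ℝ)) = _
        rw [hper]
        have := hkey q.1 q.2
        push_cast
        linarith
  -- Birkhoff sum of f' along the conjugated orbit
  have hsum' : ∀ n : ℕ,
      (∑ k ∈ Finset.range n,
        f' (((liftMap α f')^[k] ((0:ℝ), 0 + g 0 0)).1) (((liftMap α f')^[k] ((0:ℝ), 0 + g 0 0)).2))
      = ((((liftMap α f)^[n] ((0:ℝ),(0:ℝ))).2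
          + g (((liftMap α f)^[n] ((0:ℝ),(0:ℝ))).1) (((liftMap α f)^[n] ((0:ℝ),(0:ℝ))).2))
          - (0 + g 0 0)) + (n:ℝ) * (m₀:ℝ) := by
    intro n
    induction n with
    | zero => simp
    | succ n ih =>
      rw [Finset.sum_range_succ, ih, horb n, Function.iterate_succ_apply' (liftMap α f)]
      set q := (liftMap α f)^[n] ((0:ℝ),(0:ℝ)) with hq
      simp only [liftMap]
      have hper : f' q.1 ((q.2 + g q.1 q.2) + ((n * m₀ : ℤ) : ℝ)) = f' q.1 (q.2 + g q.1 q.2) :=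
        per_int (hf'p q.1) _ _
      push_cast at hper
      rw [hper]
      have := hkey q.1 q.2
      push_cast
      linarith
  -- Birkhoff sum of f telescopes
  have hsumf : ∀ n : ℕ,
      (∑ k ∈ Finset.range n,
        f (((liftMap α f)^[k] ((0:ℝ),(0:ℝ))).1) (((liftMap α f)^[k] ((0:ℝ),(0:ℝ))).2))
      = ((liftMap α f)^[n] ((0:ℝ),(0:ℝ))).2 := by
    intro n
    induction n with
    | zero => simp
    | succ n ih =>
      rw [Finset.sum_range_succ, ih, Function.iterate_succ_apply' (liftMap α f)]
      simp only [liftMap]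
  -- boundedness of g - rθ
  obtain ⟨C, hC⟩ := bounded_biper
    (h := fun θ x => g θ x - (r:ℝ) * θ)
    (hgc.sub (continuous_const.mul continuous_fst))
    (fun θ x => by show g (θ+1) x - (r:ℝ)*(θ+1) = g θ x - (r:ℝ)*θ; rw [hgdeg θ x]; ring)
    (fun θ x => by show g θ (x+1) - (r:ℝ)*θ = g θ x - (r:ℝ)*θ; rw [hgp θ x])
  -- the error term
  set E : ℕ → ℝ := fun n =>
    g (((liftMap α f)^[n] ((0:ℝ),(0:ℝ))).1) (((liftMap α f)^[n] ((0:ℝ),(0:ℝ))).2)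
      - (r:ℝ) * ((n:ℝ) * α) - g 0 0 with hEdef
  have hEbound : ∀ n : ℕ, |E n| ≤ C + |g 0 0| := by
    intro n
    have h1 := hC (((liftMap α f)^[n] ((0:ℝ),(0:ℝ))).1) (((liftMap α f)^[n] ((0:ℝ),(0:ℝ))).2)
    have h2 := abs_le.1 h1
    have h3 := le_abs_self (g 0 0)
    have h4 := neg_abs_le (g 0 0)
    rw [hEdef]
    simp only
    rw [← hiter1 n]
    exact abs_le.2 ⟨by linarith [h2.1, h2.2], by linarith [h2.1, h2.2]⟩
  have hE0 : Tendsto (fun n : ℕ => E n / n) atTop (nhds 0) := by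
    apply squeeze_zero_norm (a := fun n : ℕ => (C + |g 0 0|) / n)
    · intro n
      rw [Real.norm_eq_abs, abs_div, Nat.abs_cast]
      rcases Nat.eq_zero_or_pos n with h | h
      · simp [h]
      · exact (div_le_div_iff_of_pos_right (by exact_mod_cast h)).2 (hEbound n)
    · exact tendsto_const_div_atTop_nhds_zero_nat _
  -- the main limit
  have base : Tendsto (fun n : ℕ =>
      (∑ k ∈ Finset.range n,
        f (((liftMap α f)^[k] ((0:ℝ),(0:ℝ))).1) (((liftMap α f)^[k] ((0:ℝ),(0:ℝ))).2)) / n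
      + (E n / n + ((r:ℝ)*α + (m₀:ℝ)))) atTop
      (nhds (ρA + (0 + ((r:ℝ)*α + (m₀:ℝ))))) :=
    (hρA 0 0).add (hE0.add tendsto_const_nhds)
  have heq : (fun n : ℕ =>
      (∑ k ∈ Finset.range n,
        f (((liftMap α f)^[k] ((0:ℝ),(0:ℝ))).1) (((liftMap α f)^[k] ((0:ℝ),(0:ℝ))).2)) / n
      + (E n / n + ((r:ℝ)*α + (m₀:ℝ)))) =ᶠ[atTop] (fun n : ℕ =>
      (∑ k ∈ Finset.range n,
        f' (((liftMap α f')^[k] ((0:ℝ), 0 + g 0 0)).1)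
           (((liftMap α f')^[k] ((0:ℝ), 0 + g 0 0)).2)) / n) := by
    filter_upwards [eventually_ge_atTop 1] with n hn
    have hn0 : (n:ℝ) ≠ 0 := Nat.cast_ne_zero.2 (by omega)
    rw [hsumf n, hsum' n, hEdef]
    simp only
    field_simp
    ring
  have hT := (base.congr' heq)
  have hρC' := hρC 0 (0 + g 0 0)
  have hfinal := tendsto_nhds_unique hρC' hT
  exact ⟨m₀, by rw [hfinal]; ring⟩

end
end

section
/- Let k ≥ l ≥ 0 with k - l even, and set M = (0 1; 1 -a_k)···(0 1; 1 -a_{l+1}) with entries m₁,m₂,m₃,m₄ (row-major). Then m₁ ≥ 0, m₄ ≥ 0, m₂ ≤ 0, m₃ ≤ 0, and the matrix (|m₄| |m₂|; |m₃| |m₁|) applied to the column vector (1, α_k) equals (β_{l-1}/β_{k-1})·(1, α_l). Furthermore if l = 0 then M = (p_{k-1} -q_{k-1}; -p_k q_k). -/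
/-- Iterates of the Gauss map: α₀ = α, α_{k+1} = {1/α_k}. -/
noncomputable def ga (α : ℝ) : ℕ → ℝ
  | 0 => α
  | k + 1 => Int.fract (ga α k)⁻¹

/-- Partial quotients: a_k = [1/α_{k-1}] for k ≥ 1. -/
noncomputable def aq (α : ℝ) : ℕ → ℤ
  | 0 => 0
  | k + 1 => ⌊(ga α k)⁻¹⌋

/-- bprod α k = β_{k-1} = α₀⋯α_{k-1} (so bprod α 0 = β_{-1} = 1). -/
noncomputable def bprod (α : ℝ) (k : ℕ) : ℝ := ∏ j ∈ Finset.range k, ga α j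

/-- pqm α (k+1) = (p_k, q_k), with pqm α 0 = (p_{-1}, q_{-1}) = (1, 0). -/
noncomputable def pqm (α : ℝ) : ℕ → ℤ × ℤ
  | 0 => (1, 0)
  | 1 => (0, 1)
  | k + 2 => (aq α (k + 1) * (pqm α (k + 1)).1 + (pqm α k).1,
              aq α (k + 1) * (pqm α (k + 1)).2 + (pqm α k).2)

/-- Mmat α l n = (0 1; 1 -a_{l+n})·…·(0 1; 1 -a_{l+1}). -/
noncomputable def Mmat (α : ℝ) (l : ℕ) : ℕ → Matrix (Fin 2) (Fin 2) ℤ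
  | 0 => 1
  | n + 1 => !![0, 1; 1, -(aq α (l + n + 1))] * Mmat α l n

lemma ga_succ (α : ℝ) (n : ℕ) : ga α (n+1) = Int.fract (ga α n)⁻¹ := rfl

lemma ga_props (α : ℝ) (hα : Irrational α) (h0 : 0 < α) (h1 : α < 1) (j : ℕ) :
    (0 < ga α j ∧ ga α j < 1) ∧ Irrational (ga α j) := by
  induction j with
  | zero => exact ⟨⟨h0, h1⟩, hα⟩
  | succ n ih =>
    have hinv : Irrational (ga α n)⁻¹ := ih.2.inv
    have hfr : Irrational (Int.fract (ga α n)⁻¹) := by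
      rw [Int.fract]; exact hinv.sub_intCast _
    have h0' : 0 < Int.fract (ga α n)⁻¹ :=
      lt_of_le_of_ne (Int.fract_nonneg _) (Ne.symm hfr.ne_zero)
    exact ⟨⟨by rw [ga_succ]; exact h0', by rw [ga_succ]; exact Int.fract_lt_one _⟩,
      by rw [ga_succ]; exact hfr⟩

lemma ga_rel (α : ℝ) {j : ℕ} (h : ga α j ≠ 0) :
    ga α j * ((aq α (j+1) : ℝ) + ga α (j+1)) = 1 := by
  have : (aq α (j+1) : ℝ) + ga α (j+1) = (ga α j)⁻¹ := by
    rw [ga_succ, Int.fract]; show (⌊(ga α j)⁻¹⌋ : ℝ) + _ = _; ring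
  rw [this, mul_inv_cancel₀ h]

lemma aq_pos (α : ℝ) {j : ℕ} (h0 : 0 < ga α j) (h1 : ga α j < 1) : 1 ≤ aq α (j+1) := by
  show (1:ℤ) ≤ ⌊(ga α j)⁻¹⌋
  rw [Int.le_floor]
  push_cast
  rw [le_inv_comm₀ one_pos h0]
  linarith

lemma Mmat_succ0 (α : ℝ) (l n : ℕ) (j : Fin 2) :
    Mmat α l (n+1) 0 j = Mmat α l n 1 j := by
  show (!![0, 1; 1, -(aq α (l + n + 1))] * Mmat α l n) 0 j = _
  simp [Matrix.mul_apply, Fin.sum_univ_two]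

lemma Mmat_succ1 (α : ℝ) (l n : ℕ) (j : Fin 2) :
    Mmat α l (n+1) 1 j = Mmat α l n 0 j - aq α (l + n + 1) * Mmat α l n 1 j := by
  show (!![0, 1; 1, -(aq α (l + n + 1))] * Mmat α l n) 1 j = _
  simp [Matrix.mul_apply, Fin.sum_univ_two]; ring

lemma lemA (α : ℝ) (hg : ∀ j, 0 < ga α j) (l : ℕ) (n : ℕ) :
    ((Mmat α l n 0 0 : ℝ) + (Mmat α l n 0 1 : ℝ) * ga α l
      = ∏ j ∈ Finset.range n, ga α (l+j)) ∧
    ((Mmat α l n 1 0 : ℝ) + (Mmat α l n 1 1 : ℝ) * ga α l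
      = (∏ j ∈ Finset.range n, ga α (l+j)) * ga α (l+n)) := by
  induction n with
  | zero => simp [Mmat, Matrix.one_apply]
  | succ n ih =>
    obtain ⟨e0, e1⟩ := ih
    have hrel := ga_rel α (hg (l+n)).ne'
    have hidx : l + n + 1 = l + (n+1) := by ring
    rw [hidx] at hrel
    constructor
    · rw [Mmat_succ0, Mmat_succ0, Finset.prod_range_succ]
      linarith [e1]
    · rw [Mmat_succ1, Mmat_succ1, Finset.prod_range_succ, hidx]
      push_cast
      linear_combination e0 - (aq α (l+(n+1)) : ℝ) * e1
        - (∏ j ∈ Finset.range n, ga α (l+j)) * hrel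

lemma lemB (α : ℝ) (l : ℕ) (n : ℕ) :
    Mmat α l n 0 0 * Mmat α l n 1 1 - Mmat α l n 0 1 * Mmat α l n 1 0 = (-1)^n := by
  induction n with
  | zero => simp [Mmat, Matrix.one_apply]
  | succ n ih =>
    rw [Mmat_succ0, Mmat_succ0, Mmat_succ1, Mmat_succ1, pow_succ]
    linear_combination (-1 : ℤ) * ih

lemma lemC (α : ℝ) (ha : ∀ j, 1 ≤ aq α (j+1)) (l : ℕ) (m : ℕ) :
    0 ≤ Mmat α l (2*m) 0 0 ∧ 0 ≤ Mmat α l (2*m) 1 1 ∧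
      Mmat α l (2*m) 0 1 ≤ 0 ∧ Mmat α l (2*m) 1 0 ≤ 0 := by
  induction m with
  | zero => simp [Mmat, Matrix.one_apply]
  | succ m ih =>
    obtain ⟨h1, h4, h2, h3⟩ := ih
    have key : 2*(m+1) = (2*m+1)+1 := by ring
    have ha1 : (0:ℤ) ≤ aq α (l+2*m+1) := le_trans zero_le_one (ha _)
    have ha2 : (0:ℤ) ≤ aq α (l+(2*m+1)+1) := le_trans zero_le_one (ha _)
    rw [key]
    refine ⟨?_, ?_, ?_, ?_⟩
    · rw [Mmat_succ0, Mmat_succ1]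
      nlinarith
    · rw [Mmat_succ1, Mmat_succ0, Mmat_succ1]
      nlinarith [mul_nonneg ha2 (mul_nonneg ha1 h4)]
    · rw [Mmat_succ0, Mmat_succ1]
      nlinarith
    · rw [Mmat_succ1, Mmat_succ0, Mmat_succ1]
      have : (0:ℤ) ≤ aq α (l + (2*m+1) + 1) *
          (Mmat α l (2*m) 0 0 - aq α (l + 2*m + 1) * Mmat α l (2*m) 1 0) :=
        mul_nonneg ha2 (by nlinarith)
      linarith

lemma Mmat_eq (α : ℝ) (l n : ℕ) :
    Mmat α l (n+1) = !![0, 1; 1, -(aq α (l + n + 1))] * Mmat α l n := rfl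

lemma Mmat0_eq (α : ℝ) (n : ℕ) :
    Mmat α 0 (n+1) = !![0, 1; 1, -(aq α (n + 1))] * Mmat α 0 n := by
  rw [Mmat_eq]; norm_num

lemma lemD (α : ℝ) (m : ℕ) :
    Mmat α 0 (2*m) =
      !![(pqm α (2*m)).1, -(pqm α (2*m)).2; -(pqm α (2*m+1)).1, (pqm α (2*m+1)).2] := by
  induction m with
  | zero =>
    show (1 : Matrix (Fin 2) (Fin 2) ℤ) = _
    rw [Matrix.one_fin_two]
    norm_num [pqm]
  | succ m ih =>
    have hp2 : pqm α (2*m+1+1) = (aq α (2*m+1) * (pqm α (2*m+1)).1 + (pqm α (2*m)).1,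
        aq α (2*m+1) * (pqm α (2*m+1)).2 + (pqm α (2*m)).2) := rfl
    have hp3 : pqm α (2*m+1+1+1) = (aq α (2*m+1+1) * (pqm α (2*m+1+1)).1 + (pqm α (2*m+1)).1,
        aq α (2*m+1+1) * (pqm α (2*m+1+1)).2 + (pqm α (2*m+1)).2) := rfl
    rw [show (2:ℕ)*(m+1) = 2*m+1+1 by ring, Mmat0_eq, Mmat0_eq, ih, hp3, hp2,
        Matrix.mul_fin_two, Matrix.mul_fin_two]
    ext i j
    fin_cases i <;> fin_cases j <;>
      simp only [Matrix.cons_val', Matrix.cons_val_zero, Matrix.empty_val',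
        Matrix.cons_val_fin_one, Matrix.cons_val_one, Matrix.head_cons,
        Matrix.head_fin_const] <;> ring

/-- For k ≥ l with k - l even, the matrix M = (0 1;1 -a_k)⋯(0 1;1 -a_{l+1}) =
(m₁ m₂; m₃ m₄) has m₁,m₄ ≥ 0, m₂,m₃ ≤ 0, and
(|m₄| |m₂|; |m₃| |m₁|)·(1, α_k)ᵀ = (β_{l-1}/β_{k-1})·(1, α_l)ᵀ;
moreover if l = 0 then M = (p_{k-1} -q_{k-1}; -p_k q_k). -/
theorem stmt4 (α : ℝ) (hα : Irrational α) (h0 : 0 < α) (h1 : α < 1)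
    (k l : ℕ) (hkl : l ≤ k) (heven : 2 ∣ (k - l)) :
    (0 ≤ Mmat α l (k - l) 0 0 ∧ 0 ≤ Mmat α l (k - l) 1 1 ∧
      Mmat α l (k - l) 0 1 ≤ 0 ∧ Mmat α l (k - l) 1 0 ≤ 0) ∧
    ((|Mmat α l (k - l) 1 1| : ℝ) + (|Mmat α l (k - l) 0 1| : ℝ) * ga α k =
        bprod α l / bprod α k * 1) ∧
    ((|Mmat α l (k - l) 1 0| : ℝ) + (|Mmat α l (k - l) 0 0| : ℝ) * ga α k =
        bprod α l / bprod α k * ga α l) ∧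
    (l = 0 → Mmat α l (k - l) =
        !![(pqm α k).1, -(pqm α k).2; -(pqm α (k + 1)).1, (pqm α (k + 1)).2]) := by
  have hg : ∀ j, 0 < ga α j := fun j => ((ga_props α hα h0 h1 j).1).1
  have hl1 : ∀ j, ga α j < 1 := fun j => ((ga_props α hα h0 h1 j).1).2
  have ha : ∀ j, 1 ≤ aq α (j+1) := fun j => aq_pos α (hg j) (hl1 j)
  obtain ⟨m, hm⟩ := heven
  have hk : k = l + 2*m := by omega
  subst hk
  simp only [Nat.add_sub_cancel_left]
  obtain ⟨s1, s4, s2, s3⟩ := lemC α ha l m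
  obtain ⟨e0, e1⟩ := lemA α hg l (2*m)
  have detZ := lemB α l (2*m)
  have hpow : ((-1:ℤ))^(2*m) = 1 := by rw [pow_mul]; norm_num
  rw [hpow] at detZ
  have detR : (Mmat α l (2*m) 0 0 : ℝ) * (Mmat α l (2*m) 1 1 : ℝ)
      - (Mmat α l (2*m) 0 1 : ℝ) * (Mmat α l (2*m) 1 0 : ℝ) = 1 := by
    exact_mod_cast detZ
  set C := ∏ j ∈ Finset.range (2*m), ga α (l+j) with hCdef
  have hC : 0 < C := Finset.prod_pos (fun j _ => hg _)
  have hbl : 0 < bprod α l := Finset.prod_pos (fun j _ => hg _)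
  have hbk : bprod α (l + 2*m) = bprod α l * C := by
    rw [bprod, Finset.prod_range_add]; rfl
  refine ⟨⟨s1, s4, s2, s3⟩, ?_, ?_, ?_⟩
  · have key : (Mmat α l (2*m) 1 1 : ℝ) * C
        - (Mmat α l (2*m) 0 1 : ℝ) * C * ga α (l + 2*m) = 1 := by
      linear_combination detR - (Mmat α l (2*m) 1 1 : ℝ) * e0
        + (Mmat α l (2*m) 0 1 : ℝ) * e1
    rw [abs_of_nonneg (by exact_mod_cast s4 : (0:ℝ) ≤ _),
        abs_of_nonpos (by exact_mod_cast s2 : _ ≤ (0:ℝ)), hbk]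
    field_simp
    linear_combination key
  · have key : (Mmat α l (2*m) 0 0 : ℝ) * C * ga α (l + 2*m)
        - (Mmat α l (2*m) 1 0 : ℝ) * C = ga α l := by
      linear_combination (Mmat α l (2*m) 1 0 : ℝ) * e0
        - (Mmat α l (2*m) 0 0 : ℝ) * e1 + ga α l * detR
    rw [abs_of_nonpos (by exact_mod_cast s3 : _ ≤ (0:ℝ)),
        abs_of_nonneg (by exact_mod_cast s1 : (0:ℝ) ≤ _), hbk]
    field_simp
    linear_combination key
  · intro hl
    subst hl
    simp only [Nat.zero_add]
    exact lemD α m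
end
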